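/- For every (x,y) ∈ ℝ², the Jacobian determinant of the Pinchuk map F = (P,Q) is strictly positive; equivalently, there is no (x,y) ∈ ℝ² with t(x,y) = 0 and f(x,y) = 0 simultaneously, so t² + (t + f·(13 + 15h))² + f² > 0 everywhere. -/

import Mathlib

/-- `t = xy − 1`. -/
noncomputable def tF (x y : ℝ) : ℝ := x * y - 1

/-- `h = t(xt + 1)`. -/
noncomputable def hF (x y : ℝ) : ℝ := tF x y * (x * tF x y + 1)

/-- `f = (xt + 1)²(t² + y)`. -/
noncomputable def fF (x y : ℝ) : ℝ := (x * tF x y + 1) ^ 2 * (tF x y ^ 2 + y)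

/-- `P = f + h`. -/
noncomputable def PF (x y : ℝ) : ℝ := fF x y + hF x y

/-- The auxiliary polynomial `u(f,h)`. -/
noncomputable def uF (f h : ℝ) : ℝ :=
  170 * f * h + 91 * h ^ 2 + 195 * f * h ^ 2 + 69 * h ^ 3 + 75 * f * h ^ 3 + (75 / 4) * h ^ 4

/-- `Q = −t² − 6th(h + 1) − u(f,h)`. -/
noncomputable def QF (x y : ℝ) : ℝ :=
  -tF x y ^ 2 - 6 * tF x y * hF x y * (hF x y + 1) - uF (fF x y) (hF x y)

/-- The Jacobian determinant of the Pinchuk map `F = (P,Q)` at `(x,y)`. -/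
noncomputable def jacF (x y : ℝ) : ℝ :=
  deriv (fun x' => PF x' y) x * deriv (fun y' => QF x y') y -
    deriv (fun y' => PF x y') y * deriv (fun x' => QF x' y) x

lemma pinchuk_hPx (x y : ℝ) : HasDerivAt (fun x' => PF x' y) ((2 * (x * tF x y + 1) * (tF x y + x * y) * (tF x y ^ 2 + y) + (x * tF x y + 1) ^ 2 * (2 * tF x y * y)) + (y * (x * tF x y + 1) + tF x y * (tF x y + x * y))) x := by
  simp only [PF, fF, hF, tF]
  have ht := ((hasDerivAt_id x).mul_const y).sub_const 1
  have ha := ((hasDerivAt_id x).mul ht).add_const 1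
  have H := ((ha.pow 2).mul ((ht.pow 2).add_const y)).add (ht.mul ha)
  refine H.congr_deriv ?_
  try simp only [id_eq, Pi.mul_apply, Pi.pow_apply, Pi.add_apply, Pi.sub_apply, Pi.neg_apply]
  try push_cast
  ring

lemma pinchuk_hPy (x y : ℝ) : HasDerivAt (fun y' => PF x y') ((2 * (x * tF x y + 1) * (x * x) * (tF x y ^ 2 + y) + (x * tF x y + 1) ^ 2 * (2 * tF x y * x + 1)) + (x * (x * tF x y + 1) + tF x y * (x * x))) y := by
  simp only [PF, fF, hF, tF]
  have ht := ((hasDerivAt_id y).const_mul x).sub_const 1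
  have ha := (ht.const_mul x).add_const 1
  have H := ((ha.pow 2).mul ((ht.pow 2).add (hasDerivAt_id y))).add (ht.mul ha)
  refine H.congr_deriv ?_
  try simp only [id_eq, Pi.mul_apply, Pi.pow_apply, Pi.add_apply, Pi.sub_apply, Pi.neg_apply]
  try push_cast
  ring

lemma pinchuk_hQx (x y : ℝ) : HasDerivAt (fun x' => QF x' y) (-(2 * tF x y * y) - 6 * (y * hF x y * (hF x y + 1) + tF x y * (y * (x * tF x y + 1) + tF x y * (tF x y + x * y)) * (hF x y + 1) + tF x y * hF x y * (y * (x * tF x y + 1) + tF x y * (tF x y + x * y))) - ((170 * hF x y + 195 * hF x y ^ 2 + 75 * hF x y ^ 3) * (2 * (x * tF x y + 1) * (tF x y + x * y) * (tF x y ^ 2 + y) + (x * tF x y + 1) ^ 2 * (2 * tF x y * y)) + (170 * fF x y + 182 * hF x y + 390 * fF x y * hF x y + 207 * hF x y ^ 2 + 225 * fF x y * hF x y ^ 2 + 75 * hF x y ^ 3) * (y * (x * tF x y + 1) + tF x y * (tF x y + x * y)))) x := by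
  simp only [QF, uF, PF, fF, hF, tF]
  have ht := ((hasDerivAt_id x).mul_const y).sub_const 1
  have ha := ((hasDerivAt_id x).mul ht).add_const 1
  have hh := ht.mul ha
  have hf := (ha.pow 2).mul ((ht.pow 2).add_const y)
  have hu := ((((((hf.const_mul (170:ℝ)).mul hh).add ((hh.pow 2).const_mul 91)).add
      ((hf.const_mul 195).mul (hh.pow 2))).add ((hh.pow 3).const_mul 69)).add
      ((hf.const_mul 75).mul (hh.pow 3))).add ((hh.pow 4).const_mul (75/4))
  have H := (((ht.pow 2).neg).sub (((ht.const_mul 6).mul hh).mul (hh.add_const 1))).sub hu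
  refine H.congr_deriv ?_
  try simp only [id_eq, Pi.mul_apply, Pi.pow_apply, Pi.add_apply, Pi.sub_apply, Pi.neg_apply]
  try push_cast
  ring

lemma pinchuk_hQy (x y : ℝ) : HasDerivAt (fun y' => QF x y') (-(2 * tF x y * x) - 6 * (x * hF x y * (hF x y + 1) + tF x y * (x * (x * tF x y + 1) + tF x y * (x * x)) * (hF x y + 1) + tF x y * hF x y * (x * (x * tF x y + 1) + tF x y * (x * x))) - ((170 * hF x y + 195 * hF x y ^ 2 + 75 * hF x y ^ 3) * (2 * (x * tF x y + 1) * (x * x) * (tF x y ^ 2 + y) + (x * tF x y + 1) ^ 2 * (2 * tF x y * x + 1)) + (170 * fF x y + 182 * hF x y + 390 * fF x y * hF x y + 207 * hF x y ^ 2 + 225 * fF x y * hF x y ^ 2 + 75 * hF x y ^ 3) * (x * (x * tF x y + 1) + tF x y * (x * x)))) y := by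
  simp only [QF, uF, PF, fF, hF, tF]
  have ht := ((hasDerivAt_id y).const_mul x).sub_const 1
  have ha := (ht.const_mul x).add_const 1
  have hh := ht.mul ha
  have hf := (ha.pow 2).mul ((ht.pow 2).add (hasDerivAt_id y))
  have hu := ((((((hf.const_mul (170:ℝ)).mul hh).add ((hh.pow 2).const_mul 91)).add
      ((hf.const_mul 195).mul (hh.pow 2))).add ((hh.pow 3).const_mul 69)).add
      ((hf.const_mul 75).mul (hh.pow 3))).add ((hh.pow 4).const_mul (75/4))
  have H := (((ht.pow 2).neg).sub (((ht.const_mul 6).mul hh).mul (hh.add_const 1))).sub hu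
  refine H.congr_deriv ?_
  try simp only [id_eq, Pi.mul_apply, Pi.pow_apply, Pi.add_apply, Pi.sub_apply, Pi.neg_apply]
  try push_cast
  ring

lemma pinchuk_jac_eq (x y : ℝ) : jacF x y =
    tF x y ^ 2 + (tF x y + fF x y * (13 + 15 * hF x y)) ^ 2 + fF x y ^ 2 := by
  rw [jacF, (pinchuk_hPx x y).deriv, (pinchuk_hQy x y).deriv, (pinchuk_hPy x y).deriv,
    (pinchuk_hQx x y).deriv]
  simp only [fF, hF, tF]
  ring

lemma pinchuk_no_common_zero (x y : ℝ) (ht0 : tF x y = 0) : fF x y ≠ 0 := by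
  have hxy : x * y = 1 := by
    have := ht0; simp only [tF, sub_eq_zero] at this; exact this
  have hy : y ≠ 0 := by rintro rfl; simp at hxy
  have hf : fF x y = y := by simp [fF, ht0]
  rw [hf]; exact hy

lemma pinchuk_pos (x y : ℝ) :
    0 < tF x y ^ 2 + (tF x y + fF x y * (13 + 15 * hF x y)) ^ 2 + fF x y ^ 2 := by
  rcases eq_or_ne (tF x y) 0 with h0 | h0
  · have hf := pinchuk_no_common_zero x y h0
    have h1 : 0 < fF x y ^ 2 := (sq_nonneg _).lt_of_ne ((pow_ne_zero 2 hf).symm)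
    nlinarith [sq_nonneg (tF x y), sq_nonneg (tF x y + fF x y * (13 + 15 * hF x y))]
  · have h1 : 0 < tF x y ^ 2 := (sq_nonneg _).lt_of_ne ((pow_ne_zero 2 h0).symm)
    nlinarith [sq_nonneg (fF x y), sq_nonneg (tF x y + fF x y * (13 + 15 * hF x y))]

theorem pinchuk_jacobian_positive :
    (∀ x y : ℝ, 0 < jacF x y) ∧
    (¬ ∃ x y : ℝ, tF x y = 0 ∧ fF x y = 0) ∧
    (∀ x y : ℝ,
      0 < tF x y ^ 2 + (tF x y + fF x y * (13 + 15 * hF x y)) ^ 2 + fF x y ^ 2) := by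
  refine ⟨fun x y => ?_, ?_, fun x y => pinchuk_pos x y⟩
  · rw [pinchuk_jac_eq]; exact pinchuk_pos x y
  · rintro ⟨x, y, ht0, hf0⟩
    exact pinchuk_no_common_zero x y ht0 hf0
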